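/- Let s ∈ (0,1). For β > 0 let y(β) denote the unique y ∈ (0,1) satisfying (1 − y²)^s = β·y. Then there exist M > 0 and a sequence of real numbers (b_j)_{j≥1} such that for all β > M the series Σ_{j=1}^∞ b_j β^{−2j} converges absolutely and y(β) = (1/β)·(1 + Σ_{j=1}^∞ b_j β^{−2j}). -/

import Mathlib

open Filter
open scoped ENNReal NNReal

lemma analyticAt_log_one_aux : AnalyticAt ℝ (fun x : ℝ => Real.log (1 + x)) 0 := by
  classical
  set c : ℕ → ℝ := fun n => (-1 : ℝ) ^ (n + 1) / n with hc
  have hcn : ∀ n, ‖c n‖ ≤ 1 := by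
    intro n
    rcases Nat.eq_zero_or_pos n with h | h
    · simp [hc, h]
    · have h1 : ‖c n‖ = 1 / n := by
        rw [hc]
        simp [abs_div, abs_pow]
      rw [h1, div_le_one (by exact_mod_cast h)]
      exact_mod_cast h
  refine ⟨FormalMultilinearSeries.ofScalars ℝ c, 1, ?_, ?_, ?_⟩
  · have h := FormalMultilinearSeries.le_radius_of_bound
      (FormalMultilinearSeries.ofScalars ℝ c) 1 (r := 1) ?_
    · simpa using h
    · intro n
      rw [FormalMultilinearSeries.ofScalars_norm]
      simpa using hcn n
  · norm_num
  · intro y hy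
    have hy1 : |y| < 1 := by
      have hy' : (‖y‖₊ : ℝ≥0∞) < 1 := by
        have h : ‖y‖ₑ < 1 := by simpa [EMetric.mem_ball, edist_zero_right] using hy
        exact h
      have : ‖y‖₊ < 1 := by exact_mod_cast hy'
      simpa [Real.norm_eq_abs] using (NNReal.coe_lt_coe.2 this)
    have H := Real.hasSum_pow_div_log_of_abs_lt_one (x := -y) (by rwa [abs_neg])
    have H3 : HasSum (fun n : ℕ => c (n + 1) * y ^ (n + 1)) (Real.log (1 + y)) := by
      have hfn : (fun n : ℕ => c (n + 1) * y ^ (n + 1))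
          = fun n : ℕ => -((-y) ^ (n + 1) / ((n : ℝ) + 1)) := by
        funext n
        rw [hc]
        push_cast
        rw [neg_pow]
        ring
      rw [hfn]
      simpa [sub_neg_eq_add] using H.neg
    have H4 : HasSum (fun n : ℕ => c n * y ^ n) (Real.log (1 + y)) := by
      have h5 := (hasSum_nat_add_iff (f := fun n : ℕ => c n * y ^ n) 1).1 H3
      simpa [hc] using h5
    have hterm : ∀ n : ℕ, (FormalMultilinearSeries.ofScalars ℝ c n) (fun _ => y) = c n * y ^ n := by
      intro n
      rw [FormalMultilinearSeries.ofScalars_apply_eq, smul_eq_mul]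
    simp only [zero_add]
    simpa only [hterm] using H4

lemma analyticAt_log_one : AnalyticAt ℝ Real.log 1 := by
  have h2 : AnalyticAt ℝ (fun x : ℝ => x - 1) 1 := analyticAt_id.sub analyticAt_const
  have h0 : ((fun x : ℝ => x - 1) 1) = 0 := by norm_num
  have h3 : AnalyticAt ℝ ((fun x : ℝ => Real.log (1 + x)) ∘ fun x : ℝ => x - 1) 1 :=
    AnalyticAt.comp (by rw [show ((1:ℝ) - 1) = 0 from by norm_num]; exact analyticAt_log_one_aux) h2
  refine h3.congr ?_
  filter_upwards with x
  simp [Function.comp]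

set_option maxHeartbeats 1000000 in
/-- Large-`β` expansion of the root `y(β)` of `(1 - y^2)^s = β y`:
there are `M > 0` and coefficients `(b_j)_{j ≥ 1}` such that for all `β > M`
the series `∑_{j=1}^∞ b_j β^{-2j}` converges absolutely and
`y(β) = (1/β) (1 + ∑_{j=1}^∞ b_j β^{-2j})`. -/
theorem stmt_2 (s : ℝ) (hs0 : 0 < s) (hs1 : s < 1) :
    ∃ M : ℝ, 0 < M ∧ ∃ b : ℕ → ℝ,
      ∀ β : ℝ, M < β →
        ∀ y : ℝ, y ∈ Set.Ioo (0 : ℝ) 1 → (1 - y ^ 2) ^ s = β * y →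
          Summable (fun j : ℕ => |b (j + 1) * β ^ (-(2 : ℝ) * ((j : ℝ) + 1))|) ∧
          y = (1 / β) * (1 + ∑' j : ℕ, b (j + 1) * β ^ (-(2 : ℝ) * ((j : ℝ) + 1))) := by
  classical
  set φ : ℝ → ℝ := fun w => w * Real.exp (Real.log (1 - w) * (-(2 * s))) with hφdef
  -- φ is analytic at 0
  have hsub : AnalyticAt ℝ (fun w : ℝ => 1 - w) 0 := analyticAt_const.sub analyticAt_id
  have hlog_at : AnalyticAt ℝ Real.log ((fun w : ℝ => 1 - w) 0) := by
    show AnalyticAt ℝ Real.log ((1:ℝ) - 0)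
    rw [sub_zero]
    exact analyticAt_log_one
  have hloga : AnalyticAt ℝ (fun w : ℝ => Real.log (1 - w)) 0 :=
    AnalyticAt.comp (g := Real.log) (f := fun w : ℝ => 1 - w) (x := (0:ℝ)) hlog_at hsub
  have hφa : AnalyticAt ℝ φ 0 := by
    refine AnalyticAt.mul analyticAt_id ?_
    exact AnalyticAt.comp (g := Real.exp) (f := fun w : ℝ => Real.log (1 - w) * (-(2 * s)))
      analyticAt_rexp (hloga.mul analyticAt_const)
  -- φ has strict derivative 1 at 0
  have h1d : HasStrictDerivAt (fun w : ℝ => (1 : ℝ) - w) (-1) 0 :=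
    (hasStrictDerivAt_id (0:ℝ)).const_sub 1
  have hlogd : HasStrictDerivAt Real.log ((1:ℝ)⁻¹) ((1:ℝ) - 0) := by
    rw [show ((1:ℝ) - 0) = 1 from by norm_num]
    exact Real.hasStrictDerivAt_log one_ne_zero
  have h2d : HasStrictDerivAt (fun w : ℝ => Real.log (1 - w)) ((1:ℝ)⁻¹ * (-1)) 0 :=
    HasStrictDerivAt.comp 0 hlogd h1d
  have h3d : HasStrictDerivAt (fun w : ℝ => Real.log (1 - w) * (-(2 * s)))
      (((1:ℝ)⁻¹ * (-1)) * (-(2 * s))) 0 := h2d.mul_const _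
  have h4d : HasStrictDerivAt (fun w : ℝ => Real.exp (Real.log (1 - w) * (-(2 * s))))
      (Real.exp (Real.log (1 - (0:ℝ)) * (-(2 * s))) * (((1:ℝ)⁻¹ * (-1)) * (-(2 * s)))) 0 :=
    HasStrictDerivAt.comp 0 (Real.hasStrictDerivAt_exp _) h3d
  have hφd : HasStrictDerivAt φ 1 0 := by
    have h5d := (hasStrictDerivAt_id (0:ℝ)).mul h4d
    convert h5d using 1
    · rfl
    · rfl
    · rfl
    · simp
  -- inverse function theorem setup
  have hne : (1:ℝ) ≠ 0 := one_ne_zero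
  have hstrict : HasStrictFDerivAt φ
      ((ContinuousLinearEquiv.unitsEquivAut ℝ (Units.mk0 (1:ℝ) hne)) : ℝ →L[ℝ] ℝ) 0 :=
    hφd.hasStrictFDerivAt_equiv hne
  set F := hstrict.toOpenPartialHomeomorph φ with hFdef
  have hFcoe : (F : ℝ → ℝ) = φ := hstrict.toOpenPartialHomeomorph_coe
  have hsrc : (0:ℝ) ∈ F.source := hstrict.mem_toOpenPartialHomeomorph_source
  have hφ0 : φ 0 = 0 := by simp [hφdef]
  have hF0 : (F : ℝ → ℝ) 0 = 0 := by rw [hFcoe, hφ0]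
  have htgt : (0:ℝ) ∈ F.target := by
    have h := F.map_source hsrc
    rwa [hF0] at h
  obtain ⟨p, hp⟩ := hφa
  have hp1 : p 1 = (continuousMultilinearCurryFin1 ℝ ℝ ℝ).symm
      ((ContinuousLinearEquiv.unitsEquivAut ℝ (Units.mk0 (1:ℝ) hne)) : ℝ →L[ℝ] ℝ) := by
    have hd1 : HasFDerivAt φ (continuousMultilinearCurryFin1 ℝ ℝ ℝ (p 1)) 0 := hp.hasFDerivAt
    have hd2 : HasFDerivAt φ
        ((ContinuousLinearEquiv.unitsEquivAut ℝ (Units.mk0 (1:ℝ) hne)) : ℝ →L[ℝ] ℝ) 0 :=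
      hstrict.hasFDerivAt
    have huniq := hd1.unique hd2
    rw [← huniq]
    simp
  have hpF : HasFPowerSeriesAt (↑F) p 0 := by rw [hFcoe]; exact hp
  have hsymm0 := F.hasFPowerSeriesAt_symm hsrc hpF hp1
  rw [hF0] at hsymm0
  set W : ℝ → ℝ := ↑F.symm with hWdef
  have hW0 : W 0 = 0 := by
    have h := F.left_inv hsrc
    rw [hF0] at h
    exact h
  have hWc : ContinuousAt W 0 := by
    have h := F.continuousAt_symm (F.map_source hsrc)
    rwa [hF0] at h
  -- the function h t = (1 - W t)^s, analytically
  set g : ℝ → ℝ := fun t => Real.exp (Real.log (1 - W t) * s) with hgdef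
  have hWa : AnalyticAt ℝ W 0 := hsymm0.analyticAt
  have hga : AnalyticAt ℝ g 0 := by
    have hlogW_at : AnalyticAt ℝ Real.log ((fun t : ℝ => 1 - W t) 0) := by
      show AnalyticAt ℝ Real.log ((1:ℝ) - W 0)
      rw [hW0, sub_zero]
      exact analyticAt_log_one
    have hsubW : AnalyticAt ℝ (fun t : ℝ => 1 - W t) 0 := analyticAt_const.sub hWa
    exact AnalyticAt.comp (g := Real.exp) (f := fun t : ℝ => Real.log (1 - W t) * s)
      analyticAt_rexp ((AnalyticAt.comp (g := Real.log) (f := fun t : ℝ => 1 - W t) (x := (0:ℝ)) hlogW_at hsubW).mul analyticAt_const)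
  obtain ⟨r, hr⟩ := hga
  obtain ⟨ε, hball⟩ := hr
  have hg0 : g 0 = 1 := by simp [hgdef, hW0]
  have hcoeff0 : r.coeff 0 = 1 := by
    have h := hball.hasFPowerSeriesAt.coeff_zero 1
    rw [hg0] at h
    exact h
  -- choose δ
  have hgood : ∀ᶠ t in nhds (0:ℝ),
      (φ (W t) = t ∧ W t < 1) ∧ t ∈ EMetric.ball (0:ℝ) ε := by
    have h1 : ∀ᶠ t in nhds (0:ℝ), φ (W t) = t := by
      filter_upwards [F.open_target.mem_nhds htgt] with t ht
      have h := F.right_inv ht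
      rw [hFcoe] at h
      exact h
    have h2 : ∀ᶠ t in nhds (0:ℝ), W t < 1 := by
      have hlt : ∀ᶠ u in nhds (W 0), u < 1 := by
        rw [hW0]
        exact eventually_lt_nhds one_pos
      exact hWc.eventually hlt
    have h3 : ∀ᶠ t in nhds (0:ℝ), t ∈ EMetric.ball (0:ℝ) ε :=
      EMetric.ball_mem_nhds (0:ℝ) hball.r_pos
    exact (h1.and h2).and h3
  obtain ⟨δ, hδ0, hδ⟩ := Metric.eventually_nhds_iff.1 hgood
  refine ⟨1 + δ⁻¹, by positivity, fun j => r.coeff j, ?_⟩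
  intro β hβ y hy heq
  have hδinv : 0 < δ⁻¹ := inv_pos.2 hδ0
  have hβ1 : 1 < β := by linarith
  have hβpos : 0 < β := by linarith
  set t : ℝ := (β ^ 2)⁻¹ with htdef
  have ht0 : 0 < t := by positivity
  have htδ : t < δ := by
    have hβ2 : δ⁻¹ < β ^ 2 := by nlinarith
    have := (inv_strictAnti₀ hδinv hβ2)
    rwa [inv_inv] at this
  have hdist : dist t 0 < δ := by
    rw [Real.dist_eq, sub_zero, abs_of_pos ht0]
    exact htδ
  have hgoodt := hδ hdist
  obtain ⟨⟨hWright, hWlt1⟩, htball⟩ := hgoodt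
  have h1Wt : 0 < 1 - W t := by linarith
  -- rpow to pow conversion
  have key : ∀ j : ℕ, β ^ (-(2:ℝ) * ((j:ℝ) + 1)) = t ^ (j + 1) := by
    intro j
    have h1 : β ^ (-(2:ℝ) * ((j:ℝ) + 1)) = (β ^ ((2:ℝ) * ((j:ℝ) + 1)))⁻¹ := by
      rw [neg_mul, Real.rpow_neg (le_of_lt hβpos)]
    have h2 : β ^ ((2:ℝ) * ((j:ℝ) + 1)) = (β ^ 2) ^ (j + 1) := by
      have hc : ((2:ℝ) * ((j:ℝ) + 1)) = ((2 * (j + 1) : ℕ) : ℝ) := by push_cast; ring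
      rw [hc, Real.rpow_natCast, pow_mul]
    rw [h1, h2, ← inv_pow]
  -- facts about w = y^2
  obtain ⟨hy0, hy1⟩ := hy
  set w : ℝ := y ^ 2 with hwdef
  have hw0 : 0 < w := by positivity
  have hw1 : w < 1 := by nlinarith
  have h1w : 0 < 1 - w := by linarith
  have hyval : y = (1 - w) ^ s / β := by
    rw [eq_div_iff (ne_of_gt hβpos), mul_comm]
    exact heq.symm
  have hpow2 : ((1 - w) ^ s) ^ (2:ℕ) = (1 - w) ^ (2 * s) := by
    rw [← Real.rpow_natCast ((1 - w) ^ s) 2, ← Real.rpow_mul (le_of_lt h1w)]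
    norm_num [mul_comm]
  have hyβ : y * β = (1 - w) ^ s := by
    rw [hyval]
    field_simp
  have h2' : w * β ^ 2 = (1 - w) ^ (2 * s) := by
    rw [← hpow2, ← hyβ, hwdef]
    ring
  have hw_eq : w = t * (1 - w) ^ (2 * s) := by
    rw [← h2', htdef]
    field_simp
  -- from φ equation to rpow equation
  have hrpow_exp : ∀ x : ℝ, 0 < 1 - x →
      Real.exp (Real.log (1 - x) * (-(2 * s))) = (1 - x) ^ (-(2 * s)) := by
    intro x hx
    rw [Real.rpow_def_of_pos hx]
  have hcancel : ∀ x : ℝ, 0 < 1 - x → (1 - x) ^ (2 * s) * (1 - x) ^ (-(2 * s)) = 1 := by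
    intro x hx
    rw [← Real.rpow_add hx]
    norm_num
  have hφw : φ w = t := by
    rw [hφdef]
    simp only []
    rw [hrpow_exp w h1w]
    calc w * (1 - w) ^ (-(2 * s)) = (t * (1 - w) ^ (2 * s)) * (1 - w) ^ (-(2 * s)) := by
          rw [← hw_eq]
      _ = t * ((1 - w) ^ (2 * s) * (1 - w) ^ (-(2 * s))) := by ring
      _ = t := by rw [hcancel w h1w, mul_one]
  have hWt_eq : W t = t * (1 - W t) ^ (2 * s) := by
    have h := hWright
    rw [hφdef] at h
    simp only [] at h
    rw [hrpow_exp (W t) h1Wt] at h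
    calc W t = W t * ((1 - W t) ^ (2 * s) * (1 - W t) ^ (-(2 * s))) := by
          rw [hcancel (W t) h1Wt, mul_one]
      _ = (W t * (1 - W t) ^ (-(2 * s))) * (1 - W t) ^ (2 * s) := by ring
      _ = t * (1 - W t) ^ (2 * s) := by rw [h]
  -- uniqueness: w = W t
  have h2s : 0 < 2 * s := by linarith
  have huniq : w = W t := by
    rcases lt_trichotomy w (W t) with hlt | heq' | hgt
    · exfalso
      have hlt2 : (1 - W t) ^ (2 * s) < (1 - w) ^ (2 * s) :=
        Real.rpow_lt_rpow (le_of_lt h1Wt) (by linarith) h2s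
      have : W t < w := by
        rw [hWt_eq, hw_eq]
        exact mul_lt_mul_of_pos_left hlt2 ht0
      linarith
    · exact heq'
    · exfalso
      have hlt2 : (1 - w) ^ (2 * s) < (1 - W t) ^ (2 * s) :=
        Real.rpow_lt_rpow (le_of_lt h1w) (by linarith) h2s
      have : w < W t := by
        rw [hWt_eq, hw_eq]
        exact mul_lt_mul_of_pos_left hlt2 ht0
      linarith
  have hβy : β * y = g t := by
    rw [← heq, hgdef]
    simp only []
    rw [← Real.rpow_def_of_pos h1Wt, ← huniq, hwdef]
  -- series facts
  have hsumt : HasSum (fun n : ℕ => t ^ n * r.coeff n) (g t) := by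
    have hmem : t ∈ EMetric.ball (0:ℝ) ε := htball
    have h := hball.hasSum (y := t) hmem
    have hterm : ∀ n : ℕ, (r n) (fun _ => t) = t ^ n * r.coeff n := by
      intro n
      rw [r.apply_eq_pow_smul_coeff, smul_eq_mul]
    simp only [zero_add] at h
    simpa only [hterm] using h
  have hsn : Summable (fun n : ℕ => ‖r n fun _ : Fin n => t‖) := by
    refine r.summable_norm_apply ?_
    exact EMetric.ball_subset_ball hball.r_le htball
  have habs : Summable (fun n : ℕ => |t ^ n * r.coeff n|) := by
    refine hsn.congr fun n => ?_
    rw [r.apply_eq_pow_smul_coeff, smul_eq_mul, Real.norm_eq_abs]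
  have habs1 : Summable (fun n : ℕ => |t ^ (n + 1) * r.coeff (n + 1)|) :=
    (summable_nat_add_iff 1).2 habs
  have hβne : β ≠ 0 := ne_of_gt hβpos
  constructor
  · refine habs1.congr fun j => ?_
    rw [key j, mul_comm]
  · have htsum : ∑' j : ℕ, r.coeff (j + 1) * β ^ (-(2:ℝ) * ((j:ℝ) + 1))
        = ∑' j : ℕ, t ^ (j + 1) * r.coeff (j + 1) :=
      tsum_congr fun j => by rw [key j, mul_comm]
    have hgt_sum : g t = 1 + ∑' j : ℕ, t ^ (j + 1) * r.coeff (j + 1) := by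
      rw [← hsumt.tsum_eq, hsumt.summable.tsum_eq_zero_add]
      simp [hcoeff0]
    rw [htsum, ← hgt_sum, ← hβy]
    field_simp
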